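/- Let f be a Boolean function of algebraic degree r ≥ 2 in n variables, let a = (a_1, ..., a_n) ∈ F_2^n be nonzero and a_0 ∈ F_2. Then the following are equivalent: (i) the affine hyperplane H = {x ∈ F_2^n : a_0 + Σ_{i=1}^n a_i x_i = 0} is a degree-drop hyperplane for f; (ii) f(x) = (a_0 + Σ_{i=1}^n a_i x_i)·g(x) + c(x) for some Boolean function g of algebraic degree exactly r-1 and some Boolean function c of algebraic degree at most r-1. Consequently, f has a degree-drop hyperplane if and only if f ∼_{r-1} x_1·g(x_2, ..., x_n) for some homogeneous Boolean function g of degree r-1 in the variables x_2, ..., x_n. -/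

import Mathlib

open Finset

/-- A Boolean function in `n` variables. -/
abbrev BF (n : ℕ) := (Fin n → ZMod 2) → ZMod 2

/-- The coefficient, in the algebraic normal form of `f`, of the monomial whose
set of variables is `S` (computed by the Möbius/binary Möbius transform). -/
def anf {n : ℕ} (f : BF n) (S : Finset (Fin n)) : ZMod 2 :=
  ∑ T ∈ S.powerset, f (fun i => if i ∈ T then 1 else 0)

/-- The algebraic degree of a Boolean function, with `⊥` (i.e. `-∞`) for the zero function. -/
def degB {n : ℕ} (f : BF n) : WithBot ℕ :=
  (Finset.univ.filter (fun S : Finset (Fin n) => anf f S ≠ 0)).sup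
    (fun S => (S.card : WithBot ℕ))

/-- `f` is homogeneous of degree `r`: all monomials of its ANF have degree `r`. -/
def Homog {n : ℕ} (f : BF n) (r : ℕ) : Prop :=
  ∀ S : Finset (Fin n), anf f S ≠ 0 → S.card = r

/-- `φ` is an affine map. -/
def IsAffineMap {n m : ℕ} (φ : (Fin m → ZMod 2) → (Fin n → ZMod 2)) : Prop :=
  ∃ (L : (Fin m → ZMod 2) →ₗ[ZMod 2] (Fin n → ZMod 2)) (b : Fin n → ZMod 2),
    φ = fun x => L x + b

/-- `A` is a degree-drop affine subspace of co-dimension `k` for `f` : `A` is the range of an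
injective affine parametrization `φ` defined on `F_2^{n-k}`, and the restriction `f|_A`,
viewed as the Boolean function `f ∘ φ` in `n-k` variables, has degree `< deg f`. -/
def DegreeDropSet {n : ℕ} (f : BF n) (k : ℕ) (A : Set (Fin n → ZMod 2)) : Prop :=
  ∃ φ : (Fin (n - k) → ZMod 2) → (Fin n → ZMod 2),
    IsAffineMap φ ∧ Function.Injective φ ∧ Set.range φ = A ∧ degB (f ∘ φ) < degB f

/-- `f` has some degree-drop affine subspace of co-dimension `k`. -/
def HasDDS {n : ℕ} (f : BF n) (k : ℕ) : Prop :=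
  ∃ A : Set (Fin n → ZMod 2), DegreeDropSet f k A

/-- `SimEq r f g` is the relation `f ∼_{r-1} g` : there are an invertible affine
transformation `x ↦ L x + b` of `F_2^n` and a Boolean function `h` of degree at most `r-1`
such that `g = f ∘ φ + h`. -/
def SimEq {n : ℕ} (r : ℕ) (f g : BF n) : Prop :=
  ∃ (L : (Fin n → ZMod 2) ≃ₗ[ZMod 2] (Fin n → ZMod 2)) (b : Fin n → ZMod 2) (h : BF n),
    degB h ≤ ((r - 1 : ℕ) : WithBot ℕ) ∧ g = fun x => f (L x + b) + h x

/-- The complement `f^c` of a (homogeneous) Boolean function: each monomial `m` of the ANF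
is replaced by the monomial on the complementary set of variables. -/
def bcompl {n : ℕ} (f : BF n) : BF n :=
  fun x => ∑ S ∈ Finset.univ.filter (fun S : Finset (Fin n) => anf f S ≠ 0), ∏ i ∈ Sᶜ, x i

/-- Discrete derivative of `f` in direction `a`. -/
def deriv1 {n : ℕ} (a : Fin n → ZMod 2) (f : BF n) : BF n :=
  fun x => f (x + a) + f x

/-- `a` is a fast point of `f` : `a ≠ 0` and `deg (D_a f) < deg f - 1`. -/
def FastPoint {n : ℕ} (f : BF n) (a : Fin n → ZMod 2) : Prop :=
  a ≠ 0 ∧ degB (deriv1 a f) + 1 < degB f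

/-- Membership in `K_{k,r,n}` : `f` is a nonzero homogeneous Boolean function of degree `r`
in `n` variables with no degree-drop affine subspace of co-dimension `k`. -/
def memK {n : ℕ} (k r : ℕ) (f : BF n) : Prop :=
  Homog f r ∧ degB f = (r : WithBot ℕ) ∧ ¬ HasDDS f k

/-- The restriction degree stability of `f` : the largest `k` such that `f` has no
degree-drop affine subspace of co-dimension `k`. -/
noncomputable def degStab {n : ℕ} (f : BF n) : ℕ :=
  sSup {k : ℕ | ¬ HasDDS f k}

/-- `deg_stab(r,n)` : the maximum of `degStab f` over all Boolean functions `f` of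
degree `r` in `n` variables. -/
noncomputable def degStabRN (r n : ℕ) : ℕ :=
  sSup {d : ℕ | ∃ f : BF n, degB f = (r : WithBot ℕ) ∧ d = degStab f}

/-- `g` depends only on the variables in `S`. -/
def DependsOnlyOn {n : ℕ} (g : BF n) (S : Finset (Fin n)) : Prop :=
  ∀ x y : Fin n → ZMod 2, (∀ i ∈ S, x i = y i) → g x = g y

/-- `rank_{r-1}(f)` : the minimum `m` such that some Boolean function `g` depending on only
`m` of the variables satisfies `f ∼_{r-1} g`. -/
noncomputable def rankB {n : ℕ} (r : ℕ) (f : BF n) : ℕ :=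
  sInf {m : ℕ | ∃ g : BF n, SimEq r f g ∧
    ∃ S : Finset (Fin n), S.card = m ∧ DependsOnlyOn g S}

/-- Iterated discrete derivative `D_{a_1}(D_{a_2}(⋯ D_{a_k} f))` along a list of directions. -/
def derivList {n : ℕ} : List (Fin n → ZMod 2) → BF n → BF n
  | [], f => f
  | a :: l, f => deriv1 a (derivList l f)
namespace BFaux
variable {n m p : ℕ}

lemma two_cases (x : ZMod 2) : x = 0 ∨ x = 1 := by revert x; decide

def ind {n : ℕ} (T : Finset (Fin n)) : Fin n → ZMod 2 := fun i => if i ∈ T then 1 else 0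

def mono {n : ℕ} (S : Finset (Fin n)) : BF n := fun x => ∏ i ∈ S, x i

noncomputable def poly {n : ℕ} (c : Finset (Fin n) → ZMod 2) : BF n :=
  fun x => ∑ S, c S * mono S x

lemma anf_def' (f : BF n) (S : Finset (Fin n)) : anf f S = ∑ T ∈ S.powerset, f (ind T) := rfl

lemma mono_ind (S T : Finset (Fin n)) : mono S (ind T) = if S ⊆ T then 1 else 0 := by
  by_cases h : S ⊆ T
  · simp only [h, if_true, mono, ind]
    exact Finset.prod_eq_one (fun i hi => by simp [h hi])
  · simp only [h, if_false, mono, ind]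
    obtain ⟨i, hiS, hiT⟩ := Finset.not_subset.1 h
    exact Finset.prod_eq_zero hiS (by simp [hiT])

lemma mob (U : Finset (Fin n)) : ∀ (g : Finset (Fin n) → ZMod 2),
    ∑ T ∈ U.powerset, ∑ V ∈ T.powerset, g V = g U := by
  induction U using Finset.induction_on with
  | empty => intro g; simp
  | @insert a U ha ih =>
    intro g
    rw [Finset.sum_powerset_insert ha]
    have h2 : ∑ T ∈ U.powerset, ∑ V ∈ (insert a T).powerset, g V
        = ∑ T ∈ U.powerset, ∑ V ∈ T.powerset, (g V + g (insert a V)) := by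
      refine Finset.sum_congr rfl fun T hT => ?_
      rw [Finset.sum_powerset_insert (fun h => ha (Finset.mem_powerset.1 hT h)),
        Finset.sum_add_distrib]
    rw [h2, ih, ih (fun V => g V + g (insert a V))]
    have : (2 : ZMod 2) = 0 := rfl
    ring_nf
    rw [this]
    ring

lemma poly_ind (c : Finset (Fin n) → ZMod 2) (T : Finset (Fin n)) :
    poly c (ind T) = ∑ V ∈ T.powerset, c V := by
    unfold poly
    rw [show (∑ V, c V * mono V (ind T)) = ∑ V, if V ∈ T.powerset then c V else 0 by
      refine Finset.sum_congr rfl fun V _ => by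
        rw [mono_ind]
        simp only [Finset.mem_powerset]
        split <;> simp]
    rw [Finset.sum_ite_mem, Finset.univ_inter]
lemma anf_poly (c : Finset (Fin n) → ZMod 2) (S : Finset (Fin n)) : anf (poly c) S = c S := by
  rw [anf_def']
  calc ∑ T ∈ S.powerset, poly c (ind T) = ∑ T ∈ S.powerset, ∑ V ∈ T.powerset, c V :=
        Finset.sum_congr rfl fun T _ => poly_ind c T
    _ = c S := mob S c

lemma ind_supp (x : Fin n → ZMod 2) : ind (Finset.univ.filter fun i => x i = 1) = x := by
  funext i
  rcases two_cases (x i) with h | h <;> simp [ind, h]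

lemma poly_anf (f : BF n) : poly (anf f) = f := by
  funext x
  have hx := ind_supp x
  calc poly (anf f) x = poly (anf f) (ind (Finset.univ.filter fun i => x i = 1)) := by rw [hx]
    _ = ∑ V ∈ (Finset.univ.filter fun i => x i = 1).powerset, anf f V := poly_ind _ _
    _ = ∑ V ∈ (Finset.univ.filter fun i => x i = 1).powerset,
          ∑ T ∈ V.powerset, f (ind T) := Finset.sum_congr rfl fun V _ => anf_def' f V
    _ = f (ind (Finset.univ.filter fun i => x i = 1)) := mob _ _
    _ = f x := by rw [hx]


lemma poly_anf_fun (f : BF n) (x : Fin n → ZMod 2) : poly (anf f) x = f x := by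
  rw [poly_anf]

lemma anf_ext {f : BF n} {c : Finset (Fin n) → ZMod 2} (h : ∀ x, f x = poly c x) :
    ∀ S, anf f S = c S := by
  intro S
  rw [show f = poly c from funext h, anf_poly]

lemma anf_add (f g : BF n) (S : Finset (Fin n)) :
    anf (fun x => f x + g x) S = anf f S + anf g S := by
  simp [anf, Finset.sum_add_distrib]

lemma anf_sum {ι : Type*} (J : Finset ι) (F : ι → BF n) (S : Finset (Fin n)) :
    anf (fun x => ∑ j ∈ J, F j x) S = ∑ j ∈ J, anf (F j) S := by
  simp [anf]
  rw [Finset.sum_comm]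

lemma anf_const_mul (c : ZMod 2) (f : BF n) (S : Finset (Fin n)) :
    anf (fun x => c * f x) S = c * anf f S := by
  simp [anf, Finset.mul_sum]

/-- degree at most `d`, coefficientwise. -/
def degLE (f : BF n) (d : ℕ) : Prop := ∀ S : Finset (Fin n), anf f S ≠ 0 → S.card ≤ d

lemma degB_le_iff {f : BF n} {d : ℕ} : degB f ≤ (d : WithBot ℕ) ↔ degLE f d := by
  unfold degB degLE
  rw [Finset.sup_le_iff]
  constructor
  · intro h S hS
    have := h S (by simp [hS])
    exact_mod_cast this
  · intro h S hS
    simp only [Finset.mem_filter] at hS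
    exact_mod_cast h S hS.2

lemma withbot_lt_iff {x : WithBot ℕ} {d : ℕ} (hd : 1 ≤ d) :
    x < (d : WithBot ℕ) ↔ x ≤ ((d - 1 : ℕ) : WithBot ℕ) := by
  cases x with
  | bot => exact iff_of_true (WithBot.bot_lt_coe d) bot_le
  | coe m =>
    have hc : (WithBot.some m) = ((m : ℕ) : WithBot ℕ) := rfl
    rw [hc, Nat.cast_lt, Nat.cast_le]
    exact Nat.lt_iff_le_pred hd

lemma degLE_mono {f : BF n} {d e : ℕ} (h : degLE f d) (hde : d ≤ e) : degLE f e :=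
  fun S hS => le_trans (h S hS) hde

lemma degLE_add {f g : BF n} {d : ℕ} (hf : degLE f d) (hg : degLE g d) :
    degLE (fun x => f x + g x) d := by
  intro S hS
  rw [anf_add] at hS
  by_cases h1 : anf f S = 0
  · exact hg S (by simpa [h1] using hS)
  · exact hf S h1

lemma degLE_sum {ι : Type*} {J : Finset ι} {F : ι → BF n} {d : ℕ}
    (h : ∀ j ∈ J, degLE (F j) d) : degLE (fun x => ∑ j ∈ J, F j x) d := by
  intro S hS
  rw [anf_sum] at hS
  obtain ⟨j, hj, hne⟩ := Finset.exists_ne_zero_of_sum_ne_zero hS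
  exact h j hj S hne

lemma mono_mul_mono (S T : Finset (Fin n)) (x : Fin n → ZMod 2) :
    mono S x * mono T x = mono (S ∪ T) x := by
  unfold mono
  rw [← Finset.prod_union_inter]
  by_cases h : ∀ i ∈ S ∩ T, x i = 1
  · rw [Finset.prod_eq_one h, mul_one]
  · push_neg at h
    obtain ⟨i, hi, hxi⟩ := h
    have hxi0 : x i = 0 := (two_cases (x i)).resolve_right hxi
    rw [Finset.prod_eq_zero hi hxi0,
      Finset.prod_eq_zero (Finset.mem_union_left T (Finset.mem_inter.1 hi).1) hxi0]
    ring

lemma degLE_mono_set (S : Finset (Fin n)) : degLE (mono S) S.card := by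
  intro T hT
  have : anf (mono S) T = (if T = S then 1 else 0 : ZMod 2) := by
    refine anf_ext (c := fun T => if T = S then 1 else 0) (fun x => ?_) T
    unfold poly
    rw [Finset.sum_eq_single S (fun b _ hb => by simp [if_neg hb]) (by simp)]
    simp
  rw [this] at hT
  split at hT
  · subst ‹T = S›; exact le_rfl
  · simp at hT

lemma degLE_mul {f g : BF n} {d e : ℕ} (hf : degLE f d) (hg : degLE g e) :
    degLE (fun x => f x * g x) (d + e) := by
  have hrepr : ∀ x, f x * g x = ∑ S, ∑ T, (anf f S * anf g T) * mono (S ∪ T) x := by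
    intro x
    conv_lhs => rw [← poly_anf f, ← poly_anf g]
    unfold poly
    rw [Finset.sum_mul_sum]
    refine Finset.sum_congr rfl fun S _ => Finset.sum_congr rfl fun T _ => ?_
    rw [← mono_mul_mono]; ring
  intro U hU
  have h1 : anf (fun x => f x * g x) U
      = ∑ S, ∑ T, (anf f S * anf g T) * anf (mono (S ∪ T)) U := by
    have := anf_sum (Finset.univ) (fun S x => ∑ T, (anf f S * anf g T) * mono (S ∪ T) x) U
    rw [show (fun x => f x * g x) = fun x => ∑ S, ∑ T : Finset (Fin n),
      (anf f S * anf g T) * mono (S ∪ T) x from funext hrepr, this]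
    refine Finset.sum_congr rfl fun S _ => ?_
    rw [anf_sum]
    exact Finset.sum_congr rfl fun T _ => anf_const_mul _ _ _
  by_contra hcard
  push_neg at hcard
  apply hU
  rw [h1]
  refine Finset.sum_eq_zero fun S _ => Finset.sum_eq_zero fun T _ => ?_
  by_cases hfS : anf f S = 0
  · simp [hfS]
  by_cases hgT : anf g T = 0
  · simp [hgT]
  have : anf (mono (S ∪ T)) U = 0 := by
    have hx : anf (mono (S ∪ T)) U = (if U = S ∪ T then 1 else 0 : ZMod 2) := by
      refine anf_ext (c := fun U => if U = S ∪ T then 1 else 0) (fun x => ?_) U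
      unfold poly
      rw [Finset.sum_eq_single (S ∪ T) (fun b _ hb => by simp [if_neg hb]) (by simp)]
      simp
    rw [hx, if_neg]
    intro hEq
    have : U.card ≤ d + e := hEq ▸ le_trans (Finset.card_union_le S T)
      (add_le_add (hf S hfS) (hg T hgT))
    omega
  simp [this]


lemma anf_mono (S T : Finset (Fin n)) : anf (mono S) T = if T = S then 1 else 0 := by
  refine anf_ext (c := fun T => if T = S then 1 else 0) (fun x => ?_) T
  unfold poly
  rw [Finset.sum_eq_single S (fun b _ hb => by simp [if_neg hb]) (by simp)]
  simp

lemma degLE_of_poly {c : Finset (Fin n) → ZMod 2} {d : ℕ} (h : ∀ S, c S ≠ 0 → S.card ≤ d) :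
    degLE (poly c) d := fun S hS => h S (by rwa [anf_poly] at hS)

lemma degLE_congr {f g : BF n} {d : ℕ} (h : ∀ x, f x = g x) (hf : degLE f d) : degLE g d := by
  rwa [show g = f from (funext h).symm]

lemma degLE_const (c : ZMod 2) : degLE (fun _ : Fin n → ZMod 2 => c) 0 := by
  refine degLE_congr (f := poly (fun S => if S = ∅ then c else 0)) (fun x => ?_) ?_
  · unfold poly
    rw [Finset.sum_eq_single ∅ (fun b _ hb => by simp [if_neg hb]) (by simp)]
    simp [mono]
  · exact degLE_of_poly (fun S hS => by by_cases h : S = ∅ <;> simp_all)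

lemma degLE_zero : degLE (fun _ : Fin n → ZMod 2 => (0 : ZMod 2)) 0 := degLE_const 0

lemma degLE_prod {S : Finset (Fin n)} {F : Fin n → BF m} (h : ∀ i ∈ S, degLE (F i) 1) :
    degLE (fun x => ∏ i ∈ S, F i x) S.card := by
  induction S using Finset.induction_on with
  | empty => simpa using degLE_const 1
  | @insert a S ha ih =>
    have h1 : degLE (F a) 1 := h a (Finset.mem_insert_self a S)
    have h2 : degLE (fun x => ∏ i ∈ S, F i x) S.card :=
      ih (fun i hi => h i (Finset.mem_insert_of_mem hi))
    have := degLE_mul h1 h2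
    rw [Finset.card_insert_of_notMem ha]
    refine degLE_congr (fun x => ?_) (by rwa [add_comm] at this)
    rw [Finset.prod_insert ha]

lemma degLE_comp_affine {φ : (Fin m → ZMod 2) → (Fin n → ZMod 2)} (hφ : IsAffineMap φ)
    {f : BF n} {d : ℕ} (hf : degLE f d) : degLE (fun y => f (φ y)) d := by
  obtain ⟨L, b, rfl⟩ := hφ
  -- coordinates of φ are degree ≤ 1
  have hcoord : ∀ i : Fin n, degLE (fun y : Fin m → ZMod 2 => (L y + b) i) 1 := by
    intro i
    have hrepr : ∀ y : Fin m → ZMod 2,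
        (L y + b) i = (∑ j, (L (Pi.single j 1) i) * mono {j} y) + b i := by
      intro y
      have hy : y = ∑ j, (y j) • Pi.single j (1 : ZMod 2) := by
        funext t
        rw [Finset.sum_apply]
        rw [Finset.sum_eq_single t (fun b _ hb => by simp [Pi.single_apply, hb]) (by simp)]
        simp
      calc (L y + b) i = L y i + b i := rfl
        _ = _ := by
            conv_lhs => rw [hy]
            rw [map_sum]
            congr 1
            rw [Finset.sum_apply]
            refine Finset.sum_congr rfl fun j _ => ?_
            rw [map_smul]
            simp [mono, mul_comm]
    refine degLE_congr (fun y => (hrepr y).symm) ?_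
    refine degLE_add (degLE_sum fun j _ => ?_) (degLE_mono (degLE_const (b i)) (by omega))
    have := degLE_mul (degLE_const (L (Pi.single j 1) i)) (degLE_mono_set {j})
    simpa using this
  have hrepr2 : ∀ y : Fin m → ZMod 2,
      f (L y + b) = ∑ S, anf f S * ∏ i ∈ S, (L y + b) i := by
    intro y
    conv_lhs => rw [← poly_anf f]
    rfl
  refine degLE_congr (fun y => (hrepr2 y).symm) (degLE_sum fun S _ => ?_)
  by_cases hS : anf f S = 0
  · refine degLE_congr (f := fun _ => (0 : ZMod 2)) (fun y => by rw [hS, zero_mul]) ?_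
    exact degLE_mono degLE_zero (by omega)
  · have hP : degLE (fun y => ∏ i ∈ S, (L y + b) i) S.card :=
      degLE_prod (fun i _ => hcoord i)
    have := degLE_mul (degLE_const (anf f S)) hP
    exact degLE_mono (by simpa using this) (by simpa using hf S hS)

lemma f_eq_zero_of_anf_zero {f : BF n} (h : ∀ S, anf f S = 0) : ∀ x, f x = 0 := by
  intro x
  conv_lhs => rw [← poly_anf f]
  unfold poly
  exact Finset.sum_eq_zero fun S _ => by rw [h S, zero_mul]

lemma degB_comp_affine_le {φ : (Fin m → ZMod 2) → (Fin n → ZMod 2)} (hφ : IsAffineMap φ)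
    (f : BF n) : degB (f ∘ φ) ≤ degB f := by
  cases h : degB f with
  | bot =>
    have hall : ∀ S, anf f S = 0 := by
      by_contra hc
      push_neg at hc
      obtain ⟨S, hS⟩ := hc
      have : (S.card : WithBot ℕ) ≤ degB f := by
        unfold degB
        exact Finset.le_sup (f := fun S : Finset (Fin n) => (S.card : WithBot ℕ)) (Finset.mem_filter.2 ⟨Finset.mem_univ S, hS⟩)
      rw [h, le_bot_iff] at this
      exact absurd this (by simp)
    have : ∀ T, anf (f ∘ φ) T = 0 := by
      intro T
      have : (f ∘ φ) = fun _ => (0 : ZMod 2) := funext fun y => f_eq_zero_of_anf_zero hall (φ y)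
      rw [this]
      simp [anf]
    have hb : degB (f ∘ φ) = ⊥ := by
      unfold degB
      rw [Finset.filter_false_of_mem (fun S _ => by simp [this S]), Finset.sup_empty]
    rw [hb]
  | coe d =>
    have h1 : degLE f d := degB_le_iff.1 (le_of_eq h)
    have h2 : degLE (f ∘ φ) d := degLE_comp_affine hφ h1
    exact degB_le_iff.2 h2

lemma vadd_self (x : Fin n → ZMod 2) : x + x = 0 := by
  funext i
  exact CharTwo.add_self_eq_zero (x i)

lemma deriv_repr (f : BF n) (i₀ : Fin n) :
    ∀ x, f x + f (x + Pi.single i₀ 1) =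
      poly (fun T => if i₀ ∈ T then 0 else anf f (insert i₀ T)) x := by
  intro x
  set z : Fin n → ZMod 2 := x + Pi.single i₀ 1 with hzdef
  have hcoord : ∀ i, i ≠ i₀ → z i = x i := by
    intro i hi
    simp [hzdef, Pi.single_apply, hi]
  have hcoord0 : z i₀ = x i₀ + 1 := by simp [hzdef]
  have e1 : f x + f z = ∑ S, anf f S * (mono S x + mono S z) := by
    conv_lhs => rw [← poly_anf f]
    unfold poly
    rw [← Finset.sum_add_distrib]
    exact Finset.sum_congr rfl fun S _ => by ring
  have e2 : ∀ S : Finset (Fin n), mono S x + mono S z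
      = if i₀ ∈ S then mono (S.erase i₀) x else 0 := by
    intro S
    by_cases hS : i₀ ∈ S
    · rw [if_pos hS]
      have hm1 : mono S x = x i₀ * mono (S.erase i₀) x :=
        (Finset.mul_prod_erase S x hS).symm
      have hme : mono (S.erase i₀) z = mono (S.erase i₀) x :=
        Finset.prod_congr rfl fun i hi => hcoord i (Finset.ne_of_mem_erase hi)
      have hm2 : mono S z = (x i₀ + 1) * mono (S.erase i₀) x := by
        calc mono S z = z i₀ * mono (S.erase i₀) z := (Finset.mul_prod_erase S z hS).symm
          _ = (x i₀ + 1) * mono (S.erase i₀) x := by rw [hcoord0, hme]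
      rw [hm1, hm2]
      have h3 : ∀ u v : ZMod 2, u * v + (u + 1) * v = v := by decide
      exact h3 _ _
    · rw [if_neg hS]
      have : mono S z = mono S x :=
        Finset.prod_congr rfl fun i hi => hcoord i (fun h => hS (h ▸ hi))
      rw [this]
      exact CharTwo.add_self_eq_zero _
  rw [e1]
  have e3 : ∑ S, anf f S * (mono S x + mono S z)
      = ∑ S ∈ Finset.univ.filter (fun S => i₀ ∈ S), anf f S * mono (S.erase i₀) x := by
    calc ∑ S, anf f S * (mono S x + mono S z)
        = ∑ S, (if i₀ ∈ S then anf f S * mono (S.erase i₀) x else 0) :=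
          Finset.sum_congr rfl fun S _ => by rw [e2]; split <;> simp
      _ = _ := (Finset.sum_filter _ _).symm
  have e4 : poly (fun T => if i₀ ∈ T then 0 else anf f (insert i₀ T)) x
      = ∑ T ∈ Finset.univ.filter (fun T => i₀ ∉ T), anf f (insert i₀ T) * mono T x := by
    unfold poly
    calc ∑ T, (if i₀ ∈ T then 0 else anf f (insert i₀ T)) * mono T x
        = ∑ T, (if i₀ ∉ T then anf f (insert i₀ T) * mono T x else 0) :=
          Finset.sum_congr rfl fun T _ => by by_cases h : i₀ ∈ T <;> simp [h]
      _ = _ := (Finset.sum_filter _ _).symm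
  rw [e3, e4]
  refine Finset.sum_bij' (fun S _ => S.erase i₀) (fun T _ => insert i₀ T) ?_ ?_ ?_ ?_ ?_
  · intro S hS
    simp at hS ⊢
  · intro T hT
    simp at hT ⊢
  · intro S hS
    simp only [Finset.mem_filter] at hS
    exact Finset.insert_erase hS.2
  · intro T hT
    simp only [Finset.mem_filter] at hT
    exact Finset.erase_insert hT.2
  · intro S hS
    simp only [Finset.mem_filter] at hS
    rw [Finset.insert_erase hS.2]

lemma anf_deriv (f : BF n) (i₀ : Fin n) (T : Finset (Fin n)) :
    anf (fun x => f x + f (x + Pi.single i₀ 1)) T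
      = if i₀ ∈ T then 0 else anf f (insert i₀ T) :=
  anf_ext (deriv_repr f i₀) T

lemma isAffine_comp {φ : (Fin m → ZMod 2) → (Fin n → ZMod 2)}
    {ψ : (Fin p → ZMod 2) → (Fin m → ZMod 2)}
    (hφ : IsAffineMap φ) (hψ : IsAffineMap ψ) : IsAffineMap (fun y => φ (ψ y)) := by
  obtain ⟨L, b, rfl⟩ := hφ
  obtain ⟨L', b', rfl⟩ := hψ
  exact ⟨L ∘ₗ L', L b' + b, by funext y; simp [map_add]; abel⟩

lemma left_factor {φ : (Fin m → ZMod 2) → (Fin n → ZMod 2)}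
    {ψ : (Fin p → ZMod 2) → (Fin n → ZMod 2)}
    (hφ : IsAffineMap φ) (hφi : Function.Injective φ) (hψ : IsAffineMap ψ)
    (hsub : ∀ y, ψ y ∈ Set.range φ) :
    ∃ ρ : (Fin p → ZMod 2) → (Fin m → ZMod 2), IsAffineMap ρ ∧ ∀ y, φ (ρ y) = ψ y := by
  obtain ⟨L, b, rfl⟩ := hφ
  have hLinj : Function.Injective L := by
    intro u v huv
    apply hφi
    simp only [huv]
  obtain ⟨g, hg⟩ := L.exists_leftInverse_of_injective (LinearMap.ker_eq_bot.2 hLinj)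
  have hgL : ∀ z, g (L z) = z := fun z => congrArg (fun F => F z) (congrArg DFunLike.coe hg)
  refine ⟨fun y => g (ψ y + b), ?_, ?_⟩
  · obtain ⟨L', b', hψeq⟩ := hψ
    refine ⟨g ∘ₗ L', g (b' + b), ?_⟩
    funext y
    rw [hψeq]
    simp only [LinearMap.comp_apply]
    rw [← map_add]
    congr 1
    abel
  · intro y
    obtain ⟨z, hz⟩ := hsub y
    simp only at hz
    have h1 : ψ y + b = L z := by rw [← hz, add_assoc, vadd_self, add_zero]
    show L (g (ψ y + b)) + b = ψ y
    rw [h1, hgL, hz]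

lemma poly_add (c1 c2 : Finset (Fin n) → ZMod 2) (x : Fin n → ZMod 2) :
    poly c1 x + poly c2 x = poly (fun S => c1 S + c2 S) x := by
  unfold poly
  rw [← Finset.sum_add_distrib]
  exact Finset.sum_congr rfl fun S _ => by ring

lemma degLE_coord_mul {c : Finset (Fin n) → ZMod 2} {i₀ : Fin n} {D : ℕ}
    (h : ∀ T, c T ≠ 0 → (insert i₀ T).card ≤ D) :
    degLE (fun x => x i₀ * poly c x) D := by
  have hrepr : ∀ x, x i₀ * poly c x = ∑ T, c T * mono (insert i₀ T) x := by
    intro x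
    unfold poly
    rw [Finset.mul_sum]
    refine Finset.sum_congr rfl fun T _ => ?_
    rw [Finset.insert_eq, ← mono_mul_mono]
    have h5 : mono {i₀} x = x i₀ := Finset.prod_singleton _ _
    rw [h5]
    ring
  intro U hU
  have h1 : anf (fun x => x i₀ * poly c x) U
      = ∑ T, c T * anf (mono (insert i₀ T)) U := by
    rw [show (fun x => x i₀ * poly c x)
        = fun x => ∑ T, c T * mono (insert i₀ T) x from funext hrepr]
    rw [anf_sum (Finset.univ) (fun T x => c T * mono (insert i₀ T) x)]
    exact Finset.sum_congr rfl fun T _ => anf_const_mul _ _ _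
  rw [h1] at hU
  obtain ⟨T, _, hT⟩ := Finset.exists_ne_zero_of_sum_ne_zero hU
  rw [anf_mono] at hT
  by_cases hc : c T = 0
  · simp [hc] at hT
  by_cases hUT : U = insert i₀ T
  · rw [hUT]
    exact h T hc
  · simp [hUT] at hT

lemma degLE_unComp {M : (Fin n → ZMod 2) ≃ₗ[ZMod 2] (Fin n → ZMod 2)} {v : Fin n → ZMod 2}
    {f : BF n} {d : ℕ} (h : degLE (fun x => f (M x + v)) d) : degLE f d := by
  have hrepr : ∀ y, f y = (fun x => f (M x + v)) (M.symm y + M.symm v) := by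
    intro y
    simp only
    rw [← map_add, LinearEquiv.apply_symm_apply, add_assoc, vadd_self, add_zero]
  refine degLE_congr (fun y => (hrepr y).symm) ?_
  exact degLE_comp_affine ⟨M.symm.toLinearMap, M.symm v, rfl⟩ h

lemma param {m : ℕ} (a : Fin (m+1) → ZMod 2) (i₀ : Fin (m+1)) (hai : a i₀ = 1) (a0 : ZMod 2) :
    ∃ φ : (Fin m → ZMod 2) → (Fin (m+1) → ZMod 2),
      IsAffineMap φ ∧ Function.Injective φ ∧
      Set.range φ = {x | a0 + ∑ i, a i * x i = 0} := by
  classical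
  set e : Fin m → Fin (m+1) := i₀.succAbove with he
  have hene : ∀ k, e k ≠ i₀ := fun k => Fin.succAbove_ne i₀ k
  set t : (Fin m → ZMod 2) → ZMod 2 := fun y => ∑ k, a (e k) * y k with ht
  set φ : (Fin m → ZMod 2) → (Fin (m+1) → ZMod 2) :=
    fun y => ((∑ k, y k • Pi.single (e k) (1 : ZMod 2)) : Fin (m+1) → ZMod 2)
      + (a0 + t y) • (Pi.single i₀ (1 : ZMod 2) : Fin (m+1) → ZMod 2) with hφ
  have heval1 : ∀ y k, φ y (e k) = y k := by
    intro y k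
    rw [hφ]
    simp only [Pi.add_apply, Finset.sum_apply, Pi.smul_apply, smul_eq_mul, Pi.single_apply]
    rw [if_neg (hene k), mul_zero, add_zero]
    rw [Finset.sum_eq_single k (fun b _ hb => by
      rw [if_neg (fun hh => hb (Fin.succAbove_right_injective hh).symm), mul_zero])
      (fun hk => absurd (Finset.mem_univ k) hk)]
    rw [if_pos rfl, mul_one]
  have heval0 : ∀ y, φ y i₀ = a0 + t y := by
    intro y
    rw [hφ]
    simp only [Pi.add_apply, Finset.sum_apply, Pi.smul_apply, smul_eq_mul, Pi.single_apply]
    rw [Finset.sum_eq_zero (fun b _ => by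
      rw [if_neg (fun hh => (hene b) hh.symm), mul_zero]), zero_add]
    simp
  refine ⟨φ, ?_, ?_, ?_⟩
  · refine ⟨(∑ k : Fin m, (LinearMap.proj k).smulRight (Pi.single (e k) (1 : ZMod 2)))
      + (∑ k : Fin m, a (e k) • (LinearMap.proj (R := ZMod 2) (φ := fun _ : Fin m => ZMod 2) k)).smulRight
          (Pi.single i₀ (1 : ZMod 2)),
      a0 • Pi.single i₀ (1 : ZMod 2), ?_⟩
    funext y
    rw [hφ]
    simp only [LinearMap.add_apply, LinearMap.coe_sum, Finset.sum_apply,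
      LinearMap.smulRight_apply, LinearMap.proj_apply, LinearMap.smul_apply, smul_eq_mul]
    rw [add_smul]
    abel
  · intro y1 y2 h12
    funext k
    rw [← heval1 y1 k, ← heval1 y2 k, h12]
  · ext x
    simp only [Set.mem_range, Set.mem_setOf_eq]
    constructor
    · rintro ⟨y, rfl⟩
      rw [Fin.sum_univ_succAbove (fun i => a i * φ y i) i₀]
      rw [heval0, hai, one_mul]
      have hsum2 : (∑ k, a (Fin.succAbove i₀ k) * φ y (Fin.succAbove i₀ k)) = t y :=
        Finset.sum_congr rfl fun k _ => by
          rw [show φ y (Fin.succAbove i₀ k) = y k from heval1 y k]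
      rw [hsum2]
      have : ∀ u v : ZMod 2, u + (u + v + v) = 0 := by decide
      exact this a0 (t y)
    · intro hx
      refine ⟨fun k => x (e k), ?_⟩
      rw [Fin.sum_univ_succAbove (fun i => a i * x i) i₀, hai, one_mul] at hx
      funext j
      by_cases hj : j = i₀
      · rw [hj, heval0]
        have hsum : t (fun k => x (e k)) = ∑ k, a (Fin.succAbove i₀ k) * x (Fin.succAbove i₀ k) := rfl
        rw [hsum]
        have hzz : ∀ u v s : ZMod 2, u + (v + s) = 0 → u + s = v := by decide
        exact hzz a0 (x i₀) _ (by rw [← hx])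
      · obtain ⟨k, rfl⟩ := Fin.exists_succAbove_eq hj
        exact heval1 _ k

lemma to_hyperplane {φ : (Fin m → ZMod 2) → (Fin n → ZMod 2)}
    (hmn : m + 1 = n) (hφ : IsAffineMap φ) (hφi : Function.Injective φ) :
    ∃ (a : Fin n → ZMod 2) (a0 : ZMod 2), a ≠ 0 ∧
      Set.range φ = {x | a0 + ∑ i, a i * x i = 0} := by
  obtain ⟨L, b, rfl⟩ := hφ
  have hLinj : Function.Injective L := by
    intro u v huv
    apply hφi
    simp only [huv]
  set pL := LinearMap.range L with hpL
  have hrankp : Module.finrank (ZMod 2) pL = m := by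
    rw [hpL, LinearMap.finrank_range_of_inj hLinj]
    simp
  have hq : Module.finrank (ZMod 2) ((Fin n → ZMod 2) ⧸ pL) = 1 := by
    have h1 := Submodule.finrank_quotient_add_finrank pL
    have h2 : Module.finrank (ZMod 2) (Fin n → ZMod 2) = n := by simp
    omega
  have heqv : Nonempty (((Fin n → ZMod 2) ⧸ pL) ≃ₗ[ZMod 2] ZMod 2) :=
    ⟨LinearEquiv.ofFinrankEq _ _ (by rw [hq]; simp)⟩
  obtain ⟨eqv⟩ := heqv
  set lam : (Fin n → ZMod 2) →ₗ[ZMod 2] ZMod 2 := eqv.toLinearMap ∘ₗ pL.mkQ with hlam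
  have hker : ∀ x, lam x = 0 ↔ x ∈ pL := by
    intro x
    rw [hlam]
    simp only [LinearMap.comp_apply, LinearEquiv.coe_coe, Submodule.mkQ_apply]
    rw [LinearEquiv.map_eq_zero_iff, Submodule.Quotient.mk_eq_zero]
  set a : Fin n → ZMod 2 := fun i => lam (Pi.single i 1) with hadef
  have hexp : ∀ x, lam x = ∑ i, a i * x i := by
    intro x
    have hx : x = ∑ i, (x i) • Pi.single i (1 : ZMod 2) := by
      funext s
      rw [Finset.sum_apply]
      rw [Finset.sum_eq_single s (fun b _ hb => by simp [Pi.single_apply, hb]) (by simp)]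
      simp
    conv_lhs => rw [hx]
    rw [map_sum]
    exact Finset.sum_congr rfl fun i _ => by rw [map_smul, smul_eq_mul, mul_comm]
  have hane : a ≠ 0 := by
    intro ha0
    have hlam0 : ∀ x, lam x = 0 := by
      intro x
      rw [hexp]
      refine Finset.sum_eq_zero fun i _ => ?_
      rw [show a i = 0 from congrFun ha0 i, zero_mul]
    have hsurj : Function.Surjective eqv := eqv.surjective
    obtain ⟨z, hz⟩ := hsurj 1
    obtain ⟨x, rfl⟩ := Submodule.mkQ_surjective pL z
    have : lam x = 1 := hz
    rw [hlam0 x] at this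
    exact one_ne_zero this.symm
  refine ⟨a, lam b, hane, ?_⟩
  ext x
  simp only [Set.mem_range, Set.mem_setOf_eq]
  constructor
  · rintro ⟨y, rfl⟩
    rw [← hexp, map_add, (hker (L y)).2 ⟨y, rfl⟩, zero_add]
    exact CharTwo.add_self_eq_zero _
  · intro hx
    rw [← hexp] at hx
    have hmem : x + b ∈ pL := by
      refine (hker _).1 ?_
      rw [map_add]
      have hcomm : ∀ u v : ZMod 2, u + v = 0 → v + u = 0 := by decide
      exact hcomm _ _ hx
    obtain ⟨y, hy⟩ := LinearMap.mem_range.1 hmem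
    refine ⟨y, ?_⟩
    rw [hy, add_assoc, vadd_self, add_zero]


lemma degLE_coordfun (i : Fin n) (ci : ZMod 2) : degLE (fun x : Fin n → ZMod 2 => ci * x i) 1 := by
  have h1 := degLE_mul (degLE_const (n := n) ci) (degLE_mono_set {i})
  refine degLE_congr (fun x => ?_) (degLE_mono h1 (by simp))
  show ci * mono {i} x = ci * x i
  rw [show mono {i} x = x i from Finset.prod_singleton _ _]

lemma degLE_linform (a0 : ZMod 2) (a : Fin n → ZMod 2) :
    degLE (fun x => a0 + ∑ i, a i * x i) 1 := by
  refine degLE_add (degLE_mono (degLE_const a0) (by omega)) ?_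
  exact degLE_sum (fun i _ => degLE_coordfun i (a i))

lemma isAffine_shear (a : Fin n → ZMod 2) (a0 : ZMod 2) (u : Fin n → ZMod 2) :
    IsAffineMap (fun x : Fin n → ZMod 2 => x + (a0 + ∑ i, a i * x i) • u) := by
  refine ⟨LinearMap.id + (∑ i, a i • LinearMap.proj (R := ZMod 2)
    (φ := fun _ : Fin n => ZMod 2) i).smulRight u, a0 • u, ?_⟩
  funext x
  simp only [LinearMap.add_apply, LinearMap.id_apply, LinearMap.smulRight_apply,
    LinearMap.coe_sum, Finset.sum_apply, LinearMap.smul_apply, LinearMap.proj_apply,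
    smul_eq_mul]
  rw [add_smul]
  abel


lemma linform_add (a x y : Fin n → ZMod 2) :
    ∑ i, a i * (x + y) i = (∑ i, a i * x i) + ∑ i, a i * y i := by
  rw [← Finset.sum_add_distrib]
  exact Finset.sum_congr rfl fun i _ => by show a i * (x i + y i) = _; ring

lemma linform_smul (a : Fin n → ZMod 2) (cz : ZMod 2) (x : Fin n → ZMod 2) :
    ∑ i, a i * (cz • x) i = cz * ∑ i, a i * x i := by
  rw [Finset.mul_sum]
  exact Finset.sum_congr rfl fun i _ => by show a i * (cz * x i) = _; ring

lemma linform_single (a : Fin n → ZMod 2) (j : Fin n) :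
    ∑ i, a i * (Pi.single j 1 : Fin n → ZMod 2) i = a j := by
  rw [Finset.sum_eq_single j (fun b _ hb => by rw [Pi.single_apply, if_neg hb, mul_zero])
    (fun hh => absurd (Finset.mem_univ j) hh)]
  rw [Pi.single_eq_same, mul_one]

lemma part1main {n r : ℕ} (hn : 0 < n) (hr : 2 ≤ r) (f : BF n)
    (hdegf : degB f = (r : WithBot ℕ))
    (a : Fin n → ZMod 2) (ha : a ≠ 0) (a0 : ZMod 2) :
    DegreeDropSet f 1 {x | a0 + ∑ i, a i * x i = 0} ↔
      ∃ g c : BF n, degB g = ((r - 1 : ℕ) : WithBot ℕ) ∧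
        degB c ≤ ((r - 1 : ℕ) : WithBot ℕ) ∧
        f = fun x => (a0 + ∑ i, a i * x i) * g x + c x := by
  obtain ⟨m, rfl⟩ : ∃ m, n = m + 1 := ⟨n - 1, by omega⟩
  obtain ⟨i₀, hi₀⟩ : ∃ i, a i = 1 := by
    by_contra hc
    push_neg at hc
    apply ha
    funext i
    rcases two_cases (a i) with h | h
    · exact h
    · exact absurd h (hc i)
  obtain ⟨φ₀, hφ₀aff, hφ₀inj, hφ₀rng⟩ := param a i₀ hi₀ a0
  have hdegf_le : degLE f r := degB_le_iff.1 (le_of_eq hdegf)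
  set δ : Fin (m+1) → ZMod 2 := Pi.single i₀ 1 with hδ
  have hδsum : ∑ i, a i * δ i = 1 := by
    rw [Finset.sum_eq_single i₀ (fun b _ hb => by
      rw [hδ, Pi.single_apply, if_neg hb, mul_zero]) (fun hh => absurd (Finset.mem_univ i₀) hh)]
    rw [hδ, Pi.single_apply, if_pos rfl, hi₀, one_mul]
  constructor
  · rintro ⟨φ₁, hφ₁aff, hφ₁inj, hφ₁rng, hφ₁deg⟩
    have hlt : degB (f ∘ φ₁) < ((r : ℕ) : WithBot ℕ) := by rw [← hdegf]; exact hφ₁deg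
    have hF : degLE (f ∘ φ₁) (r - 1) := degB_le_iff.1 ((withbot_lt_iff (by omega)).1 hlt)
    set g : BF (m+1) := fun x => f x + f (x + δ) with hg
    set c : BF (m+1) := fun x => f (x + (a0 + ∑ i, a i * x i) • δ) with hc
    have hid : ∀ x, f x = (a0 + ∑ i, a i * x i) * g x + c x := by
      intro x
      rcases two_cases (a0 + ∑ i, a i * x i) with h | h
      · rw [hc]
        simp only
        rw [h, zero_smul, add_zero, zero_mul, zero_add]
      · rw [hc, hg]
        simp only
        rw [h, one_smul, one_mul]
        have hz : ∀ u v : ZMod 2, u = (u + v) + v := by decide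
        exact hz _ _
    have hgdegLE : degLE g (r - 1) := by
      intro T hT
      rw [hg] at hT
      rw [anf_deriv f i₀ T] at hT
      split at hT
      · exact absurd rfl hT
      · have := hdegf_le (insert i₀ T) hT
        rw [Finset.card_insert_of_notMem (by assumption)] at this
        omega
    have hσmem : ∀ x : Fin (m+1) → ZMod 2,
        (x + (a0 + ∑ i, a i * x i) • δ) ∈ Set.range φ₁ := by
      intro x
      rw [hφ₁rng]
      show a0 + ∑ i, a i * (x + (a0 + ∑ i, a i * x i) • δ) i = 0
      have hexp : ∑ i, a i * (x + (a0 + ∑ i, a i * x i) • δ) i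
          = (∑ i, a i * x i) + (a0 + ∑ i, a i * x i) * (∑ i, a i * δ i) := by
        rw [Finset.mul_sum, ← Finset.sum_add_distrib]
        refine Finset.sum_congr rfl fun i _ => ?_
        show a i * (x i + (a0 + ∑ i, a i * x i) * δ i) = _
        ring
      rw [hexp, hδsum, mul_one]
      have hz : ∀ u s : ZMod 2, u + (s + (u + s)) = 0 := by decide
      exact hz _ _
    obtain ⟨ρ, hρaff, hρeq⟩ := left_factor hφ₁aff hφ₁inj
      (isAffine_shear a a0 δ) hσmem
    have hcdegLE : degLE c (r - 1) := by
      refine degLE_congr (f := fun x => (f ∘ φ₁) (ρ x)) (fun x => ?_)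
        (degLE_comp_affine hρaff hF)
      show f (φ₁ (ρ x)) = c x
      rw [hρeq x]
    have hnotf : ¬ degLE f (r - 1) := by
      intro hcon
      have h1 : degB f ≤ ((r - 1 : ℕ) : WithBot ℕ) := degB_le_iff.2 hcon
      rw [hdegf] at h1
      have : r ≤ r - 1 := by exact_mod_cast h1
      omega
    refine ⟨g, c, ?_, degB_le_iff.2 hcdegLE, funext hid⟩
    refine le_antisymm (degB_le_iff.2 hgdegLE) ?_
    by_contra hlt2
    push_neg at hlt2
    have hglow : degLE g (r - 2) := by
      have := (withbot_lt_iff (d := r - 1) (by omega)).1 hlt2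
      have h2 := degB_le_iff.1 this
      exact degLE_mono h2 (by omega)
    apply hnotf
    have hmul : degLE (fun x => (a0 + ∑ i, a i * x i) * g x) (1 + (r - 2)) :=
      degLE_mul (degLE_linform a0 a) hglow
    have hmul' : degLE (fun x => (a0 + ∑ i, a i * x i) * g x) (r - 1) :=
      degLE_mono hmul (by omega)
    exact degLE_congr (fun x => (hid x).symm) (degLE_add hmul' hcdegLE)
  · rintro ⟨g, c, hgdeg, hcdeg, hfeq⟩
    refine ⟨φ₀, hφ₀aff, hφ₀inj, hφ₀rng, ?_⟩
    have hmem : ∀ y, a0 + ∑ i, a i * φ₀ y i = 0 := by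
      intro y
      have : φ₀ y ∈ Set.range φ₀ := ⟨y, rfl⟩
      rw [hφ₀rng] at this
      exact this
    have hcLE : degLE c (r - 1) := degB_le_iff.1 hcdeg
    have hcomp : degLE (f ∘ φ₀) (r - 1) := by
      refine degLE_congr (f := fun y => c (φ₀ y)) (fun y => ?_) (degLE_comp_affine hφ₀aff hcLE)
      show c (φ₀ y) = f (φ₀ y)
      rw [show f = fun x => (a0 + ∑ i, a i * x i) * g x + c x from hfeq]
      simp only
      rw [hmem y, zero_mul, zero_add]
    rw [hdegf]
    refine lt_of_le_of_lt (degB_le_iff.2 hcomp) ?_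
    exact_mod_cast Nat.sub_lt (by omega) (by omega)

end BFaux


open BFaux in
/-- characterization of degree-drop hyperplanes: `H = {x | a₀ + Σ aᵢxᵢ = 0}` is a
degree-drop hyperplane for `f` (of degree `r ≥ 2`) iff `f = (a₀ + Σ aᵢxᵢ)·g + c` with
`deg g = r-1` and `deg c ≤ r-1`. Consequently `f` has a degree-drop hyperplane iff
`f ∼_{r-1} x₁·g(x₂,…,xₙ)` for some homogeneous `g` of degree `r-1` not involving `x₁`. -/
theorem stmt1 {n r : ℕ} (hn : 0 < n) (hr : 2 ≤ r) (f : BF n)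
    (hdegf : degB f = (r : WithBot ℕ))
    (a : Fin n → ZMod 2) (ha : a ≠ 0) (a0 : ZMod 2) :
    (DegreeDropSet f 1 {x | a0 + ∑ i, a i * x i = 0} ↔
      ∃ g c : BF n, degB g = ((r - 1 : ℕ) : WithBot ℕ) ∧
        degB c ≤ ((r - 1 : ℕ) : WithBot ℕ) ∧
        f = fun x => (a0 + ∑ i, a i * x i) * g x + c x)
    ∧
    (HasDDS f 1 ↔
      ∃ g : BF n, Homog g (r - 1) ∧ degB g = ((r - 1 : ℕ) : WithBot ℕ) ∧
        (∀ S : Finset (Fin n), anf g S ≠ 0 → (⟨0, hn⟩ : Fin n) ∉ S) ∧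
        SimEq r f (fun x => x ⟨0, hn⟩ * g x)) := by
  constructor
  · exact BFaux.part1main hn hr f hdegf a ha a0
  constructor
  · rintro ⟨A, φ₁, hφ₁aff, hφ₁inj, hφ₁rng, hφ₁deg⟩
    obtain ⟨a', a0', ha', hrng'⟩ :=
      BFaux.to_hyperplane (show n - 1 + 1 = n by omega) hφ₁aff hφ₁inj
    have hdds : DegreeDropSet f 1 {x | a0' + ∑ i, a' i * x i = 0} :=
      ⟨φ₁, hφ₁aff, hφ₁inj, hrng', hφ₁deg⟩
    obtain ⟨g1, c1, hg1deg, hc1deg, hfeq⟩ :=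
      (BFaux.part1main hn hr f hdegf a' ha' a0').1 hdds
    set i₀ : Fin n := ⟨0, hn⟩ with hi₀def
    obtain ⟨j, hj⟩ : ∃ i, a' i = 1 := by
      by_contra hc
      push_neg at hc
      apply ha'
      funext i
      rcases BFaux.two_cases (a' i) with h | h
      · exact h
      · exact absurd h (hc i)
    set u : Fin n → ZMod 2 := Pi.single j 1 with hu
    set wf : (Fin n → ZMod 2) → ZMod 2 := fun x => (∑ i, a' i * x i) + x j with hwf
    set Nl : (Fin n → ZMod 2) →ₗ[ZMod 2] (Fin n → ZMod 2) :=
      LinearMap.id + ((∑ i, a' i • LinearMap.proj (R := ZMod 2)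
        (φ := fun _ : Fin n => ZMod 2) i) + LinearMap.proj j).smulRight u with hNldef
    have hNl : ∀ x, Nl x = x + wf x • u := by
      intro x
      rw [hNldef]
      simp only [LinearMap.add_apply, LinearMap.id_apply, LinearMap.smulRight_apply,
        LinearMap.coe_sum, Finset.sum_apply, LinearMap.smul_apply, LinearMap.proj_apply,
        smul_eq_mul]
      rfl
    have hwadd : ∀ (x : Fin n → ZMod 2) (cz : ZMod 2),
        wf (x + cz • u) = wf x + cz * wf u := by
      intro x cz
      rw [hwf]
      simp only
      rw [BFaux.linform_add, BFaux.linform_smul]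
      show _ + (x j + (cz • u) j) = _
      have : (cz • u) j = cz * u j := rfl
      rw [this]
      ring
    have hwu : wf u = 0 := by
      rw [hwf]
      simp only
      rw [hu, BFaux.linform_single, hj, Pi.single_eq_same]
      decide
    have hinv : ∀ x, Nl (Nl x) = x := by
      intro x
      calc Nl (Nl x) = Nl x + wf (Nl x) • u := hNl _
        _ = (x + wf x • u) + wf (x + wf x • u) • u := by rw [hNl x]
        _ = (x + wf x • u) + wf x • u := by rw [hwadd x (wf x), hwu, mul_zero, add_zero]
        _ = x := by rw [add_assoc, BFaux.vadd_self, add_zero]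
    set Neq : (Fin n → ZMod 2) ≃ₗ[ZMod 2] (Fin n → ZMod 2) :=
      LinearEquiv.ofLinear Nl Nl (LinearMap.ext hinv) (LinearMap.ext hinv) with hNeq
    set sw := Equiv.swap i₀ j with hsw
    set Sl : (Fin n → ZMod 2) ≃ₗ[ZMod 2] (Fin n → ZMod 2) :=
      { toFun := fun x => x ∘ sw
        invFun := fun x => x ∘ sw
        map_add' := fun x y => rfl
        map_smul' := fun cz x => rfl
        left_inv := fun x => by
          funext i
          show x (sw (sw i)) = x i
          rw [hsw, Equiv.swap_apply_self]
        right_inv := fun x => by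
          funext i
          show x (sw (sw i)) = x i
          rw [hsw, Equiv.swap_apply_self] } with hSl
    set M := Sl.trans Neq with hM
    set v : Fin n → ZMod 2 := a0' • u with hv
    have hMx : ∀ x, M x = (x ∘ sw) + wf (x ∘ sw) • u := by
      intro x
      show Neq (Sl x) = _
      have h1 : Sl x = x ∘ sw := rfl
      have h2 : ∀ z, Neq z = Nl z := fun z => rfl
      rw [h2, h1, hNl]
    have hMkey : ∀ x, a0' + ∑ i, a' i * (M x + v) i = x i₀ := by
      intro x
      rw [hMx, hv]
      rw [BFaux.linform_add, BFaux.linform_add, BFaux.linform_smul, BFaux.linform_smul]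
      rw [hu, BFaux.linform_single, hj, mul_one, mul_one]
      have hwfz : wf (x ∘ sw) = (∑ i, a' i * (x ∘ sw) i) + (x ∘ sw) j := rfl
      rw [hwfz]
      have hswj : (x ∘ sw) j = x i₀ := by
        show x (sw j) = x i₀
        rw [hsw, Equiv.swap_apply_right]
      rw [hswj]
      have hz : ∀ p q t : ZMod 2, p + (q + (q + t) + p) = t := by decide
      exact hz _ _ _
    set G : BF n := fun x => g1 (M x + v) with hG
    set c2 : BF n := fun x => c1 (M x + v) with hc2
    have hMaff : IsAffineMap (fun x : Fin n → ZMod 2 => M x + v) := ⟨M.toLinearMap, v, rfl⟩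
    have hGLE : degLE G (r - 1) :=
      degLE_comp_affine hMaff (degB_le_iff.1 (le_of_eq hg1deg))
    have hc1LE : degLE c1 (r - 1) := degB_le_iff.1 hc1deg
    have hc2LE : degLE c2 (r - 1) := degLE_comp_affine hMaff hc1LE
    set ctop : Finset (Fin n) → ZMod 2 :=
      fun T => if i₀ ∉ T ∧ T.card = r - 1 then anf G T else 0 with hctop
    set clow : Finset (Fin n) → ZMod 2 :=
      fun T => if i₀ ∉ T ∧ T.card = r - 1 then 0 else anf G T with hclow
    set gtop := poly ctop with hgtop
    set glow := poly clow with hglow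
    have hsplitG : ∀ x, G x = gtop x + glow x := by
      intro x
      rw [hgtop, hglow, poly_add]
      have hcc : (fun S => ctop S + clow S) = anf G := by
        funext S
        rw [hctop, hclow]
        by_cases hcond : i₀ ∉ S ∧ S.card = r - 1 <;> simp [hcond]
      rw [hcc, poly_anf_fun]
    have hfcomp : ∀ x, f (M x + v) = x i₀ * G x + c2 x := by
      intro x
      have h1 := congrFun hfeq (M x + v)
      rw [h1, hMkey x]
    have hlowLE : degLE (fun x => x i₀ * glow x) (r - 1) := by
      rw [hglow]
      refine degLE_coord_mul ?_
      intro T hT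
      simp only [hclow] at hT
      by_cases hcond : i₀ ∉ T ∧ T.card = r - 1
      · rw [if_pos hcond] at hT
        exact absurd rfl hT
      · rw [if_neg hcond] at hT
        have hcard : T.card ≤ r - 1 := hGLE T hT
        by_cases hiT : i₀ ∈ T
        · rw [Finset.insert_eq_self.2 hiT]
          exact hcard
        · push_neg at hcond
          have := hcond hiT
          rw [Finset.card_insert_of_notMem hiT]
          omega
    have hhLE : degLE (fun x => x i₀ * glow x + c2 x) (r - 1) := degLE_add hlowLE hc2LE
    have hkey : ∀ x, f (M x + v) = x i₀ * gtop x + (x i₀ * glow x + c2 x) := by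
      intro x
      rw [hfcomp x, hsplitG x]
      ring
    have hnotf : ¬ degLE (fun x => f (M x + v)) (r - 1) := by
      intro hcon
      have h1 : degLE f (r - 1) := degLE_unComp hcon
      have h2 : degB f ≤ ((r - 1 : ℕ) : WithBot ℕ) := degB_le_iff.2 h1
      rw [hdegf] at h2
      have : r ≤ r - 1 := by exact_mod_cast h2
      omega
    have hanf_gtop : ∀ T, anf gtop T = ctop T := fun T => by rw [hgtop]; exact anf_poly _ _
    have hhom : Homog gtop (r - 1) := by
      intro T hT
      simp only [hanf_gtop, hctop] at hT
      by_cases hcond : i₀ ∉ T ∧ T.card = r - 1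
      · exact hcond.2
      · rw [if_neg hcond] at hT
        exact absurd rfl hT
    have hnm : ∀ T : Finset (Fin n), anf gtop T ≠ 0 → i₀ ∉ T := by
      intro T hT
      simp only [hanf_gtop, hctop] at hT
      by_cases hcond : i₀ ∉ T ∧ T.card = r - 1
      · exact hcond.1
      · rw [if_neg hcond] at hT
        exact absurd rfl hT
    have hgtopLE : degLE gtop (r - 1) := fun T hT => le_of_eq (hhom T hT)
    have hsim : SimEq r f (fun x => x i₀ * gtop x) := by
      refine ⟨M, v, fun x => x i₀ * glow x + c2 x, degB_le_iff.2 hhLE, funext fun x => ?_⟩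
      rw [hkey x]
      have hz : ∀ p q : ZMod 2, p = p + q + q := by decide
      exact hz _ _
    refine ⟨gtop, hhom, ?_, hnm, hsim⟩
    refine le_antisymm (degB_le_iff.2 hgtopLE) ?_
    by_contra hlt2
    push_neg at hlt2
    have htoplow : degLE gtop (r - 2) := by
      have h1 := (withbot_lt_iff (d := r - 1) (by omega)).1 hlt2
      exact degLE_mono (degB_le_iff.1 h1) (by omega)
    apply hnotf
    have htopmul : degLE (fun x => x i₀ * gtop x) (r - 1) := by
      rw [hgtop]
      refine degLE_coord_mul ?_
      intro T hT
      have hcard := htoplow T (by rw [hanf_gtop T]; exact hT)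
      have hceq := hhom T (by rw [hanf_gtop T]; exact hT)
      omega
    exact degLE_congr (fun x => (hkey x).symm) (degLE_add htopmul hhLE)
  · rintro ⟨g, hhom, hgdeg, hg0, L, b, h, hdegh, heq⟩
    obtain ⟨m, rfl⟩ : ∃ m, n = m + 1 := ⟨n - 1, by omega⟩
    set i₀ : Fin (m+1) := ⟨0, hn⟩ with hi₀def
    obtain ⟨φ₂, hφ₂aff, hφ₂inj, hφ₂rng⟩ :=
      BFaux.param (Pi.single i₀ 1) i₀ (Pi.single_eq_same i₀ 1) 0
    have hx0 : ∀ y, φ₂ y i₀ = 0 := by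
      intro y
      have hmem : φ₂ y ∈ Set.range φ₂ := ⟨y, rfl⟩
      rw [hφ₂rng] at hmem
      have h1 : (0 : ZMod 2) + ∑ i, (Pi.single i₀ 1 : Fin (m+1) → ZMod 2) i * φ₂ y i = 0 := hmem
      rw [zero_add] at h1
      rw [Finset.sum_eq_single i₀ (fun b2 _ hb => by
        rw [Pi.single_apply, if_neg hb, zero_mul]) (fun hh => absurd (Finset.mem_univ i₀) hh)] at h1
      rwa [Pi.single_eq_same, one_mul] at h1
    set Φ := fun y => L (φ₂ y) + b with hΦ
    have hΦaff : IsAffineMap Φ := BFaux.isAffine_comp ⟨L.toLinearMap, b, rfl⟩ hφ₂aff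
    have hΦinj : Function.Injective Φ := by
      intro y1 y2 h12
      apply hφ₂inj
      apply L.injective
      exact add_right_cancel h12
    refine ⟨Set.range Φ, Φ, hΦaff, hΦinj, rfl, ?_⟩
    have hcomp : ∀ y, (f ∘ Φ) y = h (φ₂ y) := by
      intro y
      have h1 := congrFun heq (φ₂ y)
      rw [hx0 y, zero_mul] at h1
      show f (L (φ₂ y) + b) = h (φ₂ y)
      have hz : ∀ p q : ZMod 2, 0 = p + q → p = q := by decide
      exact hz _ _ h1
    have hhLE : degLE h (r - 1) := degB_le_iff.1 hdegh
    have hfΦ : degLE (f ∘ Φ) (r - 1) :=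
      degLE_congr (f := fun y => h (φ₂ y)) (fun y => (hcomp y).symm)
        (degLE_comp_affine hφ₂aff hhLE)
    rw [hdegf]
    refine lt_of_le_of_lt (degB_le_iff.2 hfΦ) ?_
    exact_mod_cast Nat.sub_lt (by omega) one_pos
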